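/- Let F_n = 2^(2^n) + 1 with n ≥ 1, and define the sequence S_0 = 5, S_{i} = S_{i-1}^2 - 2. Then F_n is prime if and only if F_n divides S_{2^n - 2}. -/

import Mathlib

def S : ℕ → ℤ
  | 0 => 5
  | i + 1 => (S i) ^ 2 - 2

lemma S_closed {K : Type*} [CommRing K] (ω ω' : K) (h1 : ω * ω' = 1)
    (h5 : ω + ω' = 5) : ∀ i, ((S i : ℤ) : K) = ω ^ (2 ^ i) + ω' ^ (2 ^ i) := by
  intro i
  induction i with
  | zero => rw [show S 0 = 5 from rfl]; push_cast; rw [pow_one, pow_one, h5]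
  | succ i ih =>
      have h2 : ((S (i+1) : ℤ) : K) = ((S i : ℤ) : K) ^ 2 - 2 := by
        rw [show S (i+1) = (S i)^2 - 2 from rfl]; push_cast; ring
      have h3 : (ω * ω') ^ (2 ^ i) = 1 := by rw [h1, one_pow]
      rw [h2, ih, pow_succ 2 i, pow_mul, pow_mul]
      linear_combination (2 : K) * h3

lemma mod3 (e : ℕ) (he : Even e) : ((2 ^ e + 1 : ℕ) : ZMod 3) = 2 := by
  push_cast
  rw [show (2 : ZMod 3) = -1 by decide, he.neg_one_pow]
  decide

lemma mod7 (e : ℕ) (he : ¬ 3 ∣ e) :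
    ((2 ^ e + 1 : ℕ) : ZMod 7) = 3 ∨ ((2 ^ e + 1 : ℕ) : ZMod 7) = 5 := by
  push_cast
  have h : (2 : ZMod 7) ^ e = 2 ^ (e % 3) := by
    conv_lhs => rw [← Nat.div_add_mod e 3]
    rw [pow_add, pow_mul, show (2 : ZMod 7) ^ 3 = 1 by decide, one_pow, one_mul]
  have : e % 3 = 1 ∨ e % 3 = 2 := by omega
  rcases this with h1 | h1 <;> rw [h, h1] <;> [left; right] <;> decide

instance : Fact (Nat.Prime 3) := ⟨by norm_num⟩
instance : Fact (Nat.Prime 7) := ⟨by norm_num⟩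

lemma leg_congr (p : ℕ) [Fact p.Prime] (a b : ℤ) (h : ((a : ℤ) : ZMod p) = ((b : ℤ) : ZMod p)) :
    legendreSym p a = legendreSym p b := by
  unfold legendreSym
  rw [h]

lemma euler_gen (q : ℕ) [Fact q.Prime] (r : ℕ) [Fact r.Prime] (hr2 : r ≠ 2) (h4 : q % 4 = 1)
    (h : legendreSym r q = -1) : (r : ZMod q) ^ (q / 2) = -1 := by
  have l1 : legendreSym q r = -1 := by
    rw [← legendreSym.quadratic_reciprocity_one_mod_four h4 hr2]; exact h
  have h2 := legendreSym.eq_pow q r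
  rw [l1] at h2
  push_cast at h2
  exact h2.symm

lemma euler_three (q : ℕ) [Fact q.Prime] (h4 : q % 4 = 1) (h3 : ((q : ℕ) : ZMod 3) = 2) :
    (3 : ZMod q) ^ (q / 2) = -1 := by
  apply euler_gen q 3 (by norm_num) h4
  rw [leg_congr 3 q 2 (by push_cast; exact h3)]
  decide

lemma euler_seven (q : ℕ) [Fact q.Prime] (h4 : q % 4 = 1)
    (h7 : ((q : ℕ) : ZMod 7) = 3 ∨ ((q : ℕ) : ZMod 7) = 5) :
    (7 : ZMod q) ^ (q / 2) = -1 := by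
  apply euler_gen q 7 (by norm_num) h4
  rcases h7 with h | h
  · rw [leg_congr 7 q 3 (by push_cast; exact h)]; decide
  · rw [leg_congr 7 q 5 (by push_cast; exact h)]; decide

lemma prime_dvd (n : ℕ) (hn : 1 ≤ n) (hq : Nat.Prime (2 ^ 2 ^ n + 1)) :
    ((2 ^ 2 ^ n + 1 : ℕ) : ℤ) ∣ S (2 ^ n - 2) := by
  set q : ℕ := 2 ^ 2 ^ n + 1 with hqdef
  set m : ℕ := 2 ^ n - 2 with hmdef
  have hk2 : 2 ≤ 2 ^ n := by
    calc 2 = 2 ^ 1 := rfl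
    _ ≤ 2 ^ n := Nat.pow_le_pow_right (by norm_num) hn
  have hkpow : 2 ^ 2 ^ n = 4 * 2 ^ (2 ^ n - 2) := by
    rw [show (4 : ℕ) = 2 ^ 2 from rfl, ← pow_add]
    congr 1
    omega
  have hq4 : q % 4 = 1 := by omega
  have hq_odd : q % 2 = 1 := by omega
  have hq5 : 5 ≤ q := by
    have : 2 ^ 2 ≤ 2 ^ 2 ^ n := Nat.pow_le_pow_right (by norm_num) hk2
    omega
  have hq3 : ((q : ℕ) : ZMod 3) = 2 := mod3 (2 ^ n) ⟨2 ^ (n - 1), by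
    rw [← two_mul, ← pow_succ']
    congr 1
    omega⟩
  have hq7 : ((q : ℕ) : ZMod 7) = 3 ∨ ((q : ℕ) : ZMod 7) = 5 := by
    refine mod7 (2 ^ n) fun hdvd => ?_
    have := (Nat.Prime.dvd_of_dvd_pow (by norm_num : Nat.Prime 3) hdvd)
    omega
  haveI : Fact q.Prime := ⟨hq⟩
  set K := AlgebraicClosure (ZMod q) with hK
  haveI : CharP K q := inferInstance
  obtain ⟨s, hs⟩ : ∃ s : K, s ^ 2 = 3 := IsAlgClosed.exists_pow_nat_eq 3 two_pos
  obtain ⟨t, ht⟩ : ∃ t : K, t ^ 2 = 7 := IsAlgClosed.exists_pow_nat_eq 7 two_pos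
  have e3 : (3 : ZMod q) ^ (q / 2) = -1 := euler_three q hq4 hq3
  have e7 : (7 : ZMod q) ^ (q / 2) = -1 := euler_seven q hq4 hq7
  have cast3 : algebraMap (ZMod q) K (3 : ZMod q) = 3 := map_ofNat (algebraMap (ZMod q) K) 3
  have cast7 : algebraMap (ZMod q) K (7 : ZMod q) = 7 := map_ofNat (algebraMap (ZMod q) K) 7
  have e3K : (3 : K) ^ (q / 2) = -1 := by
    rw [← cast3, ← map_pow, e3, map_neg, map_one]
  have e7K : (7 : K) ^ (q / 2) = -1 := by
    rw [← cast7, ← map_pow, e7, map_neg, map_one]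
  have hqsplit : q = 2 * (q / 2) + 1 := by omega
  have hsq : s ^ q = -s := by
    have h' : s ^ q = s ^ (2 * (q / 2) + 1) := by congr 1
    rw [h', pow_succ, pow_mul, hs, e3K]; ring
  have htq : t ^ q = -t := by
    have h' : t ^ q = t ^ (2 * (q / 2) + 1) := by congr 1
    rw [h', pow_succ, pow_mul, ht, e7K]; ring
  have h2ne : (2 : ZMod q) ≠ 0 := by
    have : ((2 : ℕ) : ZMod q) ≠ 0 := by
      rw [Ne, ZMod.natCast_eq_zero_iff]
      intro hdvd
      have := Nat.le_of_dvd (by norm_num) hdvd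
      omega
    exact_mod_cast this
  set i2 : K := algebraMap (ZMod q) K (2 : ZMod q)⁻¹ with hi2def
  have hi2 : (2 : K) * i2 = 1 := by
    have h := mul_inv_cancel₀ h2ne
    calc (2 : K) * i2 = algebraMap (ZMod q) K ((2 : ZMod q) * (2 : ZMod q)⁻¹) := by
          rw [map_mul, map_ofNat]
    _ = 1 := by rw [h, map_one]
  have hi2q : i2 ^ q = i2 := by rw [hi2def, ← map_pow, ZMod.pow_card]
  set ω : K := (5 + s * t) * i2 with hωdef
  set ω' : K := (5 - s * t) * i2 with hω'def
  set τ : K := (s + t) * i2 with hτdef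
  have h1 : ω * ω' = 1 := by
    rw [hωdef, hω'def]
    linear_combination (-(t ^ 2) * i2 ^ 2) * hs + (-3 * i2 ^ 2) * ht + (2 * i2 + 1) * hi2
  have h5 : ω + ω' = 5 := by rw [hωdef, hω'def]; linear_combination 5 * hi2
  have hτsq : τ ^ 2 = ω := by
    rw [hτdef, hωdef]
    linear_combination i2 ^ 2 * hs + i2 ^ 2 * ht + ((5 + s * t) * i2) * hi2
  have hωne : ω ≠ 0 := fun h => by simp [h] at h1
  have hτne : τ ≠ 0 := fun h => hωne (by rw [← hτsq, h]; ring)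
  have hτq : τ ^ q = -τ := by
    rw [hτdef, mul_pow, add_pow_char, hsq, htq, hi2q]
    ring
  have hτq1 : τ ^ (q - 1) = -1 := by
    apply mul_right_cancel₀ hτne
    calc τ ^ (q - 1) * τ = τ ^ (q - 1 + 1) := (pow_succ τ (q - 1)).symm
    _ = τ ^ q := by rw [Nat.sub_add_cancel (by omega : 1 ≤ q)]
    _ = -1 * τ := by rw [hτq]; ring
  have hωhalf : ω ^ (q / 2) = -1 := by
    rw [← hτsq, ← pow_mul]
    rw [show 2 * (q / 2) = q - 1 by omega, hτq1]
  set A : K := ω ^ 2 ^ m with hAdef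
  have hq2 : q / 2 = 2 ^ (2 ^ n - 1) := by
    have h1 : 2 ^ 2 ^ n = 2 * 2 ^ (2 ^ n - 1) := by
      rw [← pow_succ']
      congr 1
      omega
    omega
  have hA2 : A ^ 2 = -1 := by
    rw [hAdef, ← pow_mul, ← pow_succ 2 m, show m + 1 = 2 ^ n - 1 by omega, ← hq2, hωhalf]
  have hinv : A * ω' ^ 2 ^ m = 1 := by rw [hAdef, ← mul_pow, h1, one_pow]
  have hS := S_closed ω ω' h1 h5 m
  have key : ((S m : ℤ) : K) * A = 0 := by
    rw [hS, hAdef]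
    linear_combination hA2 + hinv
  have hAne : A ≠ 0 := by
    intro h
    rw [h] at hA2
    norm_num at hA2
  have hS0 : ((S m : ℤ) : K) = 0 := by
    rcases mul_eq_zero.mp key with h | h
    · exact h
    · exact absurd h hAne
  have hz : ((S m : ℤ) : ZMod q) = 0 := by
    apply (algebraMap (ZMod q) K).injective
    rw [map_intCast, map_zero]
    exact hS0
  exact_mod_cast (ZMod.intCast_zmod_eq_zero_iff_dvd _ q).mp hz

lemma dvd_prime (n : ℕ) (hn : 1 ≤ n) (h : ((2 ^ 2 ^ n + 1 : ℕ) : ℤ) ∣ S (2 ^ n - 2)) :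
    Nat.Prime (2 ^ 2 ^ n + 1) := by
  set q : ℕ := 2 ^ 2 ^ n + 1 with hqdef
  set m : ℕ := 2 ^ n - 2 with hmdef
  have hk2 : 2 ≤ 2 ^ n := by
    calc 2 = 2 ^ 1 := rfl
    _ ≤ 2 ^ n := Nat.pow_le_pow_right (by norm_num) hn
  have hkpow : 2 ^ 2 ^ n = 4 * 2 ^ (2 ^ n - 2) := by
    rw [show (4 : ℕ) = 2 ^ 2 from rfl, ← pow_add]
    congr 1
    omega
  have hq_odd : q % 2 = 1 := by omega
  have hq5 : 5 ≤ q := by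
    have : 2 ^ 2 ≤ 2 ^ 2 ^ n := Nat.pow_le_pow_right (by norm_num) hk2
    omega
  have hq3 : ((q : ℕ) : ZMod 3) = 2 := mod3 (2 ^ n) ⟨2 ^ (n - 1), by
    rw [← two_mul, ← pow_succ']
    congr 1
    omega⟩
  have hq7 : ((q : ℕ) : ZMod 7) = 3 ∨ ((q : ℕ) : ZMod 7) = 5 := by
    refine mod7 (2 ^ n) fun hdvd => ?_
    have := (Nat.Prime.dvd_of_dvd_pow (by norm_num : Nat.Prime 3) hdvd)
    omega
  set p : ℕ := q.minFac with hpdef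
  have hp : p.Prime := Nat.minFac_prime (by omega)
  have hpq : p ∣ q := Nat.minFac_dvd q
  have hp2 : p ≠ 2 := by
    intro h2
    rw [h2] at hpq
    omega
  haveI : Fact p.Prime := ⟨hp⟩
  have hplt : 2 < p := lt_of_le_of_ne hp.two_le (Ne.symm hp2)
  haveI : Fact (2 < p) := ⟨hplt⟩
  have hpodd : p % 2 = 1 := hp.eq_two_or_odd.resolve_left hp2
  have hp3 : p ≠ 3 := by
    intro h3
    rw [h3] at hpq
    have : ((q : ℕ) : ZMod 3) = 0 := (ZMod.natCast_eq_zero_iff q 3).mpr hpq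
    rw [hq3] at this
    exact absurd this (by decide)
  have hp7 : p ≠ 7 := by
    intro h7
    rw [h7] at hpq
    have h0 : ((q : ℕ) : ZMod 7) = 0 := (ZMod.natCast_eq_zero_iff q 7).mpr hpq
    rcases hq7 with h' | h' <;> rw [h'] at h0 <;> exact absurd h0 (by decide)
  set K := AlgebraicClosure (ZMod p) with hK
  haveI : CharP K p := inferInstance
  obtain ⟨u, hu⟩ : ∃ u : K, u ^ 2 = 21 := IsAlgClosed.exists_pow_nat_eq 21 two_pos
  have h21 : (21 : ZMod p) ≠ 0 := by
    rw [show (21 : ZMod p) = ((21 : ℕ) : ZMod p) by norm_cast, Ne,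
      ZMod.natCast_eq_zero_iff]
    intro hdvd
    rcases (Nat.Prime.dvd_mul hp).mp (show p ∣ 3 * 7 from hdvd) with h' | h'
    · exact hp3 ((Nat.prime_dvd_prime_iff_eq hp (by norm_num)).mp h')
    · exact hp7 ((Nat.prime_dvd_prime_iff_eq hp (by norm_num)).mp h')
  set c : ZMod p := (21 : ZMod p) ^ (p / 2) with hcdef
  have hc2 : c ^ 2 = 1 := by
    rw [hcdef, ← pow_mul]
    rw [show p / 2 * 2 = p - 1 by omega]
    exact ZMod.pow_card_sub_one_eq_one h21
  have hcc : c = 1 ∨ c = -1 := by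
    have hfac : (c - 1) * (c + 1) = 0 := by linear_combination hc2
    rcases mul_eq_zero.mp hfac with h' | h'
    · left; linear_combination h'
    · right; linear_combination h'
  have cast21 : algebraMap (ZMod p) K (21 : ZMod p) = 21 := map_ofNat _ 21
  have hup : u ^ p = algebraMap (ZMod p) K c * u := by
    have h' : u ^ p = u ^ (2 * (p / 2) + 1) := by congr 1; omega
    rw [h', pow_succ, pow_mul, hu, hcdef, map_pow, cast21]
  have h2ne : (2 : ZMod p) ≠ 0 := by
    have : ((2 : ℕ) : ZMod p) ≠ 0 := by
      rw [Ne, ZMod.natCast_eq_zero_iff]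
      intro hdvd
      have := Nat.le_of_dvd (by norm_num) hdvd
      omega
    exact_mod_cast this
  set i2 : K := algebraMap (ZMod p) K (2 : ZMod p)⁻¹ with hi2def
  have hi2 : (2 : K) * i2 = 1 := by
    have h' := mul_inv_cancel₀ h2ne
    calc (2 : K) * i2 = algebraMap (ZMod p) K ((2 : ZMod p) * (2 : ZMod p)⁻¹) := by
          rw [map_mul, map_ofNat]
    _ = 1 := by rw [h', map_one]
  have hi2q : i2 ^ p = i2 := by rw [hi2def, ← map_pow, ZMod.pow_card]
  have hfive : (5 : K) ^ p = 5 := by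
    rw [show (5 : K) = algebraMap (ZMod p) K (5 : ZMod p) from (map_ofNat _ 5).symm,
      ← map_pow, ZMod.pow_card]
  set ω : K := (5 + u) * i2 with hωdef
  set ω' : K := (5 - u) * i2 with hω'def
  have h1 : ω * ω' = 1 := by
    rw [hωdef, hω'def]
    linear_combination (-(i2 ^ 2)) * hu + (2 * i2 + 1) * hi2
  have h5 : ω + ω' = 5 := by rw [hωdef, hω'def]; linear_combination 5 * hi2
  have hωne : ω ≠ 0 := fun h' => by simp [h'] at h1
  have hS0 : ((S m : ℤ) : K) = 0 := by
    have hpz : ((p : ℕ) : ℤ) ∣ S m := dvd_trans (Int.natCast_dvd_natCast.mpr hpq) h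
    have hz : ((S m : ℤ) : ZMod p) = 0 := (ZMod.intCast_zmod_eq_zero_iff_dvd _ p).mpr hpz
    rw [← map_intCast (algebraMap (ZMod p) K), hz, map_zero]
  have hS := S_closed ω ω' h1 h5 m
  set A : K := ω ^ 2 ^ m with hAdef
  have hAB : A * ω' ^ 2 ^ m = 1 := by rw [hAdef, ← mul_pow, h1, one_pow]
  have hABsum : A + ω' ^ 2 ^ m = 0 := by rw [hAdef, ← hS, hS0]
  have hA2 : A ^ 2 = -1 := by linear_combination (-1 : K) * hAB + A * hABsum
  have hpow1 : ω ^ 2 ^ (2 ^ n - 1) = -1 := by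
    have : ω ^ 2 ^ (2 ^ n - 1) = A ^ 2 := by
      rw [hAdef, ← pow_mul, ← pow_succ 2 m]
      congr 2
      omega
    rw [this, hA2]
  have hpow2 : ω ^ 2 ^ (2 ^ n - 1 + 1) = 1 := by
    have h4 : ω ^ 2 ^ (2 ^ n - 1 + 1) = (A ^ 2) ^ 2 := by
      rw [hAdef, ← pow_mul, ← pow_mul]
      congr 1
      rw [show 2 ^ n - 1 + 1 = 2 ^ n by omega, hkpow, hmdef]
      ring
    rw [h4, hA2]
    ring
  have horder : orderOf ω = 2 ^ 2 ^ n := by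
    have := orderOf_eq_prime_pow (x := ω) (p := 2) (n := 2 ^ n - 1)
      (by rw [hpow1]; exact CharP.neg_one_ne_one K p) hpow2
    rw [this]
    congr 1
    omega
  have hop : ω ^ p = (5 + algebraMap (ZMod p) K c * u) * i2 := by
    rw [hωdef, mul_pow, add_pow_char, hfive, hup, hi2q]
  have hpeq : p = q := by
    rcases hcc with hc | hc
    · -- ω^p = ω, order divides p - 1
      have hωp : ω ^ p = ω := by rw [hop, hc, map_one, one_mul, hωdef]
      have hωp1 : ω ^ (p - 1) = 1 := by
        apply mul_right_cancel₀ hωne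
        rw [← pow_succ, Nat.sub_add_cancel hp.one_lt.le, one_mul]
        exact hωp
      have hdv : 2 ^ 2 ^ n ∣ p - 1 := horder ▸ orderOf_dvd_of_pow_eq_one hωp1
      have hle : 2 ^ 2 ^ n ≤ p - 1 := Nat.le_of_dvd (by omega) hdv
      have hple : p ≤ q := Nat.le_of_dvd (by omega) hpq
      omega
    · -- ω^p = ω', order divides p + 1
      have hωp : ω ^ p = ω' := by rw [hop, hc, map_neg, map_one, hω'def]; ring
      have hωp1 : ω ^ (p + 1) = 1 := by
        rw [pow_succ, hωp, mul_comm, h1]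
      have hdv : 2 ^ 2 ^ n ∣ p + 1 := horder ▸ orderOf_dvd_of_pow_eq_one hωp1
      have hle : 2 ^ 2 ^ n ≤ p + 1 := Nat.le_of_dvd (by omega) hdv
      by_contra hne
      have hple : p < q := lt_of_le_of_ne (Nat.le_of_dvd (by omega) hpq) hne
      obtain ⟨k, hk⟩ := hpq
      have hk2' : 2 ≤ k := by
        rcases Nat.lt_or_ge k 2 with h' | h'
        · interval_cases k <;> omega
        · exact h'
      have h2p : 2 * p ≤ q := by
        rw [hk, mul_comm]
        exact Nat.mul_le_mul_left p hk2'
      omega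
  rw [← hpeq]
  exact hp

theorem fermat_llt_test (n : ℕ) (hn : 1 ≤ n) :
    Nat.Prime (2 ^ (2 ^ n) + 1) ↔ ((2 ^ (2 ^ n) + 1 : ℤ) ∣ S (2 ^ n - 2)) := by
  constructor
  · intro h
    have := prime_dvd n hn h
    exact_mod_cast this
  · intro h
    exact dvd_prime n hn (by exact_mod_cast h)
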